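/- Let L > 0 and A be real numbers with 0 ≤ A ≤ 4π and 4πA − A² ≤ L². Then for all integers k and l, k² + (4π²/L²)·((2l + 1) − kA/(2π))² ≥ 4π²/L², and the minimum value 4π²/L² is attained at (k, l) = (0, 0). (These are the eigenvalues λ²(k,l) of the square of the Dirac operator on the flat torus ℝ²/Γ with the spin structure (ε₁, ε₂) = (0, 1), where Γ is generated by (2π, 0) and (A/2, L/2); the constraints on A and L hold for the length L and enclosed area A of a simple closed curve on the unit sphere by the spherical isoperimetric inequality.) -/

import Mathlib

open Real

/-- The Dirac eigenvalues `λ²(k,l) = k² + (4π²/L²)((2l+1) - kA/(2π))²` on the flat torus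
`ℝ²/Γ` (with `Γ` generated by `(2π,0)` and `(A/2, L/2)` and spin structure `(0,1)`)
are bounded below by `4π²/L²`, provided `0 ≤ A ≤ 4π` and `4πA - A² ≤ L²`, and this
minimum is attained at `(k,l) = (0,0)`. -/
theorem dirac_eigenvalues_flat_torus_min
    (L A : ℝ) (hL : 0 < L) (hA0 : 0 ≤ A) (hA4π : A ≤ 4 * π)
    (hiso : 4 * π * A - A^2 ≤ L^2) :
    (∀ k l : ℤ,
      (k:ℝ)^2 + (4 * π^2 / L^2) * ((2 * (l:ℝ) + 1) - (k:ℝ) * A / (2 * π))^2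
        ≥ 4 * π^2 / L^2) ∧
    ((0:ℝ)^2 + (4 * π^2 / L^2) * ((2 * (0:ℝ) + 1) - (0:ℝ) * A / (2 * π))^2
        = 4 * π^2 / L^2) := by
  have hπ : (0:ℝ) < π := Real.pi_pos
  have hL2 : (0:ℝ) < L^2 := by positivity
  constructor
  · intro k l
    have hmZ : (1:ℤ) ≤ (2*l+1)^2 := by rcases le_or_gt 0 l with h|h <;> nlinarith
    have hm2Z : (1:ℤ) ≤ (2*(l-k)+1)^2 := by
      rcases le_or_gt 0 (l-k) with h|h <;> nlinarith
    have hm : (1:ℝ) ≤ (2*(l:ℝ)+1)^2 := by exact_mod_cast hmZ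
    have hm2 : (1:ℝ) ≤ (2*((l:ℝ)-(k:ℝ))+1)^2 := by exact_mod_cast hm2Z
    set m : ℝ := 2*(l:ℝ)+1 with hmdef
    have hk2 : (0:ℝ) ≤ (k:ℝ)^2 := sq_nonneg _
    have hπ2 : (0:ℝ) ≤ 4*π^2 := by positivity
    -- key polynomial inequality: 4π² ≤ L²k² + (2πm - kA)²
    have key : 4*π^2 ≤ L^2*(k:ℝ)^2 + (2*π*m - (k:ℝ)*A)^2 := by
      have hstep : (4*π*A - A^2)*(k:ℝ)^2 ≤ L^2*(k:ℝ)^2 :=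
        mul_le_mul_of_nonneg_right hiso hk2
      have hexp : (4*π*A - A^2)*(k:ℝ)^2 + (2*π*m - (k:ℝ)*A)^2
          = 4*π^2*m^2 + 4*π*(A*((k:ℝ)*((k:ℝ)-m))) := by ring
      have hm' : 4*π^2 ≤ 4*π^2*m^2 := by nlinarith
      rcases le_or_gt 0 ((k:ℝ)*((k:ℝ)-m)) with h|h
      · have h1 : 0 ≤ 4*π*(A*((k:ℝ)*((k:ℝ)-m))) := by positivity
        nlinarith
      · have h4 : A*((k:ℝ)*((k:ℝ)-m)) ≥ (4*π)*((k:ℝ)*((k:ℝ)-m)) :=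
          mul_le_mul_of_nonpos_right hA4π h.le
        have h5 : 4*π*(A*((k:ℝ)*((k:ℝ)-m))) ≥ 4*π*((4*π)*((k:ℝ)*((k:ℝ)-m))) := by
          have := mul_le_mul_of_nonneg_left h4 (by positivity : (0:ℝ) ≤ 4*π)
          linarith
        have hmk : m - 2*(k:ℝ) = 2*((l:ℝ)-(k:ℝ))+1 := by rw [hmdef]; ring
        have h6 : 4*π^2*m^2 + 4*π*((4*π)*((k:ℝ)*((k:ℝ)-m)))
            = 4*π^2*(m - 2*(k:ℝ))^2 := by ring
        have h7 : 4*π^2 ≤ 4*π^2*(m - 2*(k:ℝ))^2 := by rw [hmk]; nlinarith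
        linarith
    have heq : (k:ℝ)^2 + (4 * π^2 / L^2) * (m - (k:ℝ) * A / (2 * π))^2
        = (L^2*(k:ℝ)^2 + (2*π*m - (k:ℝ)*A)^2) / L^2 := by
      field_simp
      ring
    rw [ge_iff_le, heq]
    gcongr
  · field_simp
    ring
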